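/- There is exactly one pair (m, n) of real numbers with m > 0 and n > 1 satisfying both P(m,n) = 0 and n = m/4 + 1/m; it is given by n₀ = √(14/(3√3) − 5/3) and m₀ = (9/77)·(23n₀ − 3n₀³). In other words, the curves n = g(m) and n = h(m) = m/4 + 1/m intersect in exactly one point in the region m > 0, n > 1. -/

import Mathlib

/-- `P(m,n) = m³n³ + 15m²n² + 48mn − 27m² − 64`. -/
noncomputable def P (m n : ℝ) : ℝ :=
  m ^ 3 * n ^ 3 + 15 * m ^ 2 * n ^ 2 + 48 * m * n - 27 * m ^ 2 - 64

/-- There is exactly one pair `(m, n)` with `m > 0`, `n > 1`, `P(m,n) = 0` and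
`n = m/4 + 1/m`; it is given by `n₀ = √(14/(3√3) − 5/3)`, `m₀ = (9/77)(23n₀ − 3n₀³)`. -/
theorem unique_intersection_g_h :
    ∀ m n : ℝ,
      (0 < m ∧ 1 < n ∧ P m n = 0 ∧ n = m / 4 + 1 / m) ↔
      (n = Real.sqrt (14 / (3 * Real.sqrt 3) - 5 / 3) ∧
        m = (9 / 77) * (23 * n - 3 * n ^ 3)) := by
  intro m n
  set s := Real.sqrt 3 with hsdef
  have hs2 : s ^ 2 = 3 := Real.sq_sqrt (by norm_num)
  have hs0 : 0 < s := Real.sqrt_pos.mpr (by norm_num)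
  have hs32 : 3/2 < s := by nlinarith
  have hs127 : 12/7 < s := by nlinarith
  have hsu : s < 2 := by nlinarith
  have harg_eq : 14 / (3 * s) - 5 / 3 = (14 * s - 15) / 9 := by
    have h1 : (14 : ℝ) / (3 * s) = 14 * s / 9 := by
      rw [div_eq_div_iff (by positivity) (by norm_num)]
      linear_combination -42 * hs2
    rw [h1]; ring
  constructor
  · rintro ⟨hm, hn, hP, hnm⟩
    have hm0 : m ≠ 0 := hm.ne'
    have hn0 : (0:ℝ) ≤ n := by linarith
    have hmn : m * n = m ^ 2 / 4 + 1 := by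
      rw [hnm]; field_simp
    have hP' : (m*n)^3 + 15*(m*n)^2 + 48*(m*n) - 27*m^2 - 64 = 0 := by
      unfold P at hP; linear_combination hP
    rw [hmn] at hP'
    have h64 : m^2 * ((m^2+36)^2 - 1728) = 0 := by linear_combination 64 * hP'
    have key : (m^2+36)^2 = 1728 := by
      rcases mul_eq_zero.mp h64 with h | h
      · exact absurd h (by positivity)
      · linarith
    have hfac : (m^2+36-24*s) * (m^2+36+24*s) = 0 := by
      linear_combination key - 576 * hs2
    have hm2 : m^2 = 24*s - 36 := by
      rcases mul_eq_zero.mp hfac with h | h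
      · linarith
      · nlinarith [sq_nonneg m]
    have hmn' : m * n = 6*s - 8 := by linear_combination hmn + (1/4) * hm2
    have hn2mul : n^2 * m^2 = (14*s-15)/9 * (24*s-36) := by
      calc n^2 * m^2 = (m*n)^2 := by ring
        _ = (6*s-8)^2 := by rw [hmn']
        _ = (14*s-15)/9 * (24*s-36) := by linear_combination (-4/3 : ℝ) * hs2
    rw [← hm2] at hn2mul
    have hn2 : n^2 = (14*s-15)/9 := mul_right_cancel₀ (pow_ne_zero 2 hm0) hn2mul
    constructor
    · rw [harg_eq, ← hn2, Real.sqrt_sq hn0]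
    · have e2 : m * ((9/77) * (23*n - 3*n^3)) = m * m := by
        calc m * ((9/77) * (23*n - 3*n^3))
            = (9/77) * (23*(m*n) - 3*(m*n)*n^2) := by ring
          _ = (9/77) * (23*(6*s-8) - 3*(6*s-8)*((14*s-15)/9)) := by rw [hmn', hn2]
          _ = 24*s - 36 := by linear_combination (-36/11 : ℝ) * hs2
          _ = m * m := by linear_combination -hm2
      exact (mul_left_cancel₀ hm0 e2.symm)
  · rintro ⟨hn, hm⟩
    have harg0 : (0:ℝ) ≤ 14 / (3 * s) - 5 / 3 := by rw [harg_eq]; nlinarith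
    have hn0 : (0:ℝ) ≤ n := by rw [hn]; exact Real.sqrt_nonneg _
    have hn2 : n^2 = (14*s-15)/9 := by
      rw [hn, Real.sq_sqrt harg0]; exact harg_eq
    have hn1 : 1 < n := by nlinarith
    have hm' : m = (6/11) * (6-s) * n := by
      rw [hm]; linear_combination (-(27/77) * n) * hn2
    have hmpos : 0 < m := by
      rw [hm']
      apply mul_pos (by nlinarith) (by linarith)
    have hm2 : m^2 = 24*s - 36 := by
      rw [hm']
      linear_combination ((36/121)*(6-s)^2) * hn2 + ((4/121)*(14*s-183)) * hs2
    have hmn' : m * n = 6*s - 8 := by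
      rw [hm']
      linear_combination ((6/11)*(6-s)) * hn2 + (-(28/33) : ℝ) * hs2
    refine ⟨hmpos, hn1, ?_, ?_⟩
    · unfold P
      linear_combination ((m*n)^2 + (m*n)*(6*s-8) + (6*s-8)^2 + 15*(m*n) + 15*(6*s-8) + 48) * hmn'
        + (-27 : ℝ) * hm2 + (216*s - 324) * hs2
    · have hm0 : m ≠ 0 := hmpos.ne'
      field_simp
      linear_combination 4 * hmn' - hm2
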